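/- Every compact Hausdorff quarter-stratifiable space is metrizable. -/

import Mathlib

/-- A topological space is quarter-stratifiable if there is a function `g : ℕ × X → τ`
assigning open sets such that `X = ⋃_{x} g n x` for every `n`, and whenever
`x ∈ g n (xs n)` for all `n`, the sequence `xs` converges to `x`. -/
def QuarterStratifiable (X : Type*) [TopologicalSpace X] : Prop :=
  ∃ g : ℕ → X → Set X,
    (∀ n x, IsOpen (g n x)) ∧
    (∀ n : ℕ, ∀ y : X, ∃ x : X, y ∈ g n x) ∧
    (∀ (x : X) (xs : ℕ → X), (∀ n, x ∈ g n (xs n)) →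
      Filter.Tendsto xs Filter.atTop (nhds x))

/-- Every compact Hausdorff quarter-stratifiable space is metrizable. -/
theorem quarterStratifiable_compact_metrizable (X : Type*) [TopologicalSpace X]
    [CompactSpace X] [T2Space X] (hX : QuarterStratifiable X) :
    TopologicalSpace.MetrizableSpace X := by
  classical
  obtain ⟨g, hopen, hcover, hconv⟩ := hX
  -- the Gδ sets witnessing a Gδ diagonal
  set U : ℕ → Set (X × X) := fun n => ⋃ x, g n x ×ˢ g n x with hU
  have hUopen : ∀ n, IsOpen (U n) := fun n =>
    isOpen_iUnion fun x => (hopen n x).prod (hopen n x)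
  have hUdiag : ∀ n, Set.diagonal X ⊆ U n := by
    intro n p hp
    obtain ⟨c, hc⟩ := hcover n p.1
    exact Set.mem_iUnion.2 ⟨c, hc, hp ▸ hc⟩
  have hUinter : ∀ p : X × X, (∀ n, p ∈ U n) → p.1 = p.2 := by
    intro p hp
    have : ∀ n, ∃ c, p.1 ∈ g n c ∧ p.2 ∈ g n c := by
      intro n
      obtain ⟨c, hc1, hc2⟩ := Set.mem_iUnion.1 (hp n)
      exact ⟨c, hc1, hc2⟩
    choose c hc1 hc2 using this
    exact tendsto_nhds_unique (hconv p.1 c hc1) (hconv p.2 c hc2)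
  -- refine to a nested sequence with closures
  have key : ∀ s : Set (X × X), IsOpen s → Set.diagonal X ⊆ s →
      ∃ v, IsOpen v ∧ Set.diagonal X ⊆ v ∧ closure v ⊆ s := fun s hs hΔ =>
    normal_exists_closure_subset isClosed_diagonal hs hΔ
  let key' : ∀ s : Set (X × X), IsOpen s → Set.diagonal X ⊆ s →
      { v : Set (X × X) // IsOpen v ∧ Set.diagonal X ⊆ v ∧ closure v ⊆ s } := fun s hs hd =>
    ⟨(key s hs hd).choose, (key s hs hd).choose_spec⟩
  let T := {v : Set (X × X) // IsOpen v ∧ Set.diagonal X ⊆ v}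
  let step : ℕ → T → T := fun n p =>
    let q := key' (U (n + 1) ∩ p.1) ((hUopen (n + 1)).inter p.2.1)
      (Set.subset_inter (hUdiag (n + 1)) p.2.2)
    ⟨q.1, q.2.1, q.2.2.1⟩
  let V0 : T :=
    let q := key' (U 0) (hUopen 0) (hUdiag 0)
    ⟨q.1, q.2.1, q.2.2.1⟩
  let Vt : ℕ → T := fun n => Nat.rec V0 step n
  set V : ℕ → Set (X × X) := fun n => (Vt n).1 with hV
  have hVopen : ∀ n, IsOpen (V n) := fun n => (Vt n).2.1
  have hVdiag : ∀ n, Set.diagonal X ⊆ V n := fun n => (Vt n).2.2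
  have hVcl0 : ∀ n, closure (V (n + 1)) ⊆ U (n + 1) ∩ V n := fun n =>
    (key' (U (n + 1) ∩ (Vt n).1) ((hUopen (n + 1)).inter (Vt n).2.1)
      (Set.subset_inter (hUdiag (n + 1)) (Vt n).2.2)).2.2.2
  have hVcl : ∀ n, closure (V n) ⊆ U n := by
    intro n
    cases n with
    | zero => exact (key' (U 0) (hUopen 0) (hUdiag 0)).2.2.2
    | succ n => exact (hVcl0 n).trans Set.inter_subset_left
  have hVstep : ∀ n, V (n + 1) ⊆ V n := fun n =>
    subset_closure.trans ((hVcl0 n).trans Set.inter_subset_right)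
  have hVanti : ∀ {m n : ℕ}, n ≤ m → V m ⊆ V n := by
    intro m n h
    induction h with
    | refl => exact subset_rfl
    | step h ih => exact (hVstep _).trans ih
  -- choose basic boxes
  have hbox : ∀ (n : ℕ) (x : X), ∃ b : Set X, x ∈ b ∧ IsOpen b ∧ b ×ˢ b ⊆ V n := by
    intro n x
    have hmem : V n ∈ nhds (x, x) := (hVopen n).mem_nhds (hVdiag n rfl)
    rw [mem_nhds_prod_iff'] at hmem
    obtain ⟨u, v, hu, hxu, hv, hxv, huv⟩ := hmem
    refine ⟨u ∩ v, ⟨hxu, hxv⟩, hu.inter hv, ?_⟩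
    exact fun p hp => huv ⟨hp.1.1, hp.2.2⟩
  choose B hBmem hBopen hBsub using hbox
  -- finite subcovers
  have hsub : ∀ n : ℕ, ∃ t : Finset X, (Set.univ : Set X) ⊆ ⋃ x ∈ t, B n x := by
    intro n
    exact isCompact_univ.elim_finite_subcover (B n) (hBopen n)
      (fun x _ => Set.mem_iUnion.2 ⟨x, hBmem n x⟩)
  choose t ht using hsub
  -- the countable basis
  set S : Set (Set X) := ⋃ n, (B n) '' (t n : Set X) with hS
  have hScount : S.Countable :=
    Set.countable_iUnion fun n => ((t n).finite_toSet.image _).countable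
  have hbasis : TopologicalSpace.IsTopologicalBasis S := by
    apply TopologicalSpace.isTopologicalBasis_of_isOpen_of_nhds
    · rintro u hu
      obtain ⟨n, hn⟩ := Set.mem_iUnion.1 hu
      obtain ⟨x, -, rfl⟩ := hn
      exact hBopen n x
    · intro a u hau hu
      by_contra hcon
      push_neg at hcon
      have hcon' : ∀ n, ∀ x ∈ t n, a ∈ B n x → ∃ y, y ∈ B n x ∧ y ∉ u := by
        intro n x hx hax
        rcases Set.not_subset.1 (hcon (B n x) (Set.mem_iUnion.2 ⟨n, ⟨x, hx, rfl⟩⟩) hax) with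
          ⟨y, hy1, hy2⟩
        exact ⟨y, hy1, hy2⟩
      have hb : ∀ n, ∃ x, x ∈ t n ∧ a ∈ B n x := by
        intro n
        obtain ⟨x, hx, hax⟩ := Set.mem_iUnion₂.1 (ht n (Set.mem_univ a))
        exact ⟨x, hx, hax⟩
      choose b hbt hab using hb
      have hy : ∀ n, ∃ y, y ∈ B n (b n) ∧ y ∉ u := fun n => hcon' n (b n) (hbt n) (hab n)
      choose y hyB hyu using hy
      -- y n lives in the compact set uᶜ
      have hKcomp : IsCompact (uᶜ : Set X) := hu.isClosed_compl.isCompact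
      have hle : Filter.map y Filter.atTop ≤ Filter.principal uᶜ := by
        rw [Filter.le_principal_iff, Filter.mem_map]
        exact Filter.univ_mem' fun n => hyu n
      obtain ⟨z, hzK, hz⟩ := hKcomp.exists_clusterPt hle
      -- (a, z) is a cluster point of n ↦ (a, y n)
      have hclz : MapClusterPt z Filter.atTop y := hz
      have hpair : MapClusterPt (a, z) Filter.atTop (fun n => (a, y n)) := by
        rw [mapClusterPt_iff_frequently]
        intro s hs
        rw [mem_nhds_prod_iff] at hs
        obtain ⟨u1, hu1, v1, hv1, huv1⟩ := hs
        have := (mapClusterPt_iff_frequently.1 hclz) v1 hv1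
        exact this.mono fun n hn => huv1 ⟨mem_of_mem_nhds hu1, hn⟩
      -- eventually the pairs are in V n, so (a,z) ∈ closure (V n)
      have hmemcl : ∀ n, (a, z) ∈ closure (V n) := by
        intro n
        have hev : ∀ m, n ≤ m → (a, y m) ∈ V n := fun m hm =>
          hVanti hm (hBsub m (b m) ⟨hab m, hyB m⟩)
        have hle2 : Filter.map (fun m => (a, y m)) Filter.atTop ≤ Filter.principal (V n) := by
          rw [Filter.le_principal_iff, Filter.mem_map]
          exact Filter.mem_of_superset (Filter.mem_atTop n) fun m hm => hev m hm
        rw [mem_closure_iff_clusterPt]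
        exact hpair.clusterPt.mono hle2
      have haz : a = z := hUinter (a, z) fun n => hVcl n (hmemcl n)
      exact hzK (haz ▸ hau)
  have : SecondCountableTopology X := hbasis.secondCountableTopology hScount
  exact TopologicalSpace.metrizableSpace_of_t3_secondCountable X
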